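/- Let U and V_n (n ∈ ℕ) be pairwise non-isomorphic selective ultrafilters on ℕ. For every function f : ℕ×ℕ → ℕ there is a set X ∈ U-∑_n V_n such that the restriction of f to X is either (i) a constant function, or (ii) equal to g ∘ π₁ for some one-to-one g : ℕ → ℕ, or (iii) a one-to-one function. -/

import Mathlib

/-- The `U`-indexed sum of the ultrafilters `V n`: a set `X ⊆ ℕ × ℕ` belongs to the sum
iff `{n | X(n) ∈ V n} ∈ U`, where `X(n)` is the `n`-th vertical section of `X`. -/
def sumUF (U : Ultrafilter ℕ) (V : ℕ → Ultrafilter ℕ) : Ultrafilter (ℕ × ℕ) :=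
  U.bind fun n => (V n).map fun m => (n, m)

/-- `U` is selective: for every `f : ℕ → ℕ` there is `A ∈ U` on which `f` is
one-to-one or constant. -/
def IsSelective (U : Ultrafilter ℕ) : Prop :=
  ∀ f : ℕ → ℕ, ∃ A ∈ U, Set.InjOn f A ∨ ∃ c, ∀ a ∈ A, f a = c

/-- Two ultrafilters on ℕ are (RK-)isomorphic iff a bijection of ℕ carries one to the other. -/
def RKIso (U V : Ultrafilter ℕ) : Prop :=
  ∃ e : ℕ ≃ ℕ, Ultrafilter.map (⇑e) U = V



open Set

lemma mem_sumUF_iff (U : Ultrafilter ℕ) (V : ℕ → Ultrafilter ℕ) (X : Set (ℕ × ℕ)) :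
    X ∈ U.bind (fun n => (V n).map fun m => (n, m)) ↔ {n | {m | (n, m) ∈ X} ∈ V n} ∈ U :=
  Iff.rfl

lemma infinite_mem {U : Ultrafilter ℕ} (hU : ¬∃ a, U = pure a) {s : Set ℕ} (hs : s ∈ U) :
    s.Infinite := by
  by_contra h
  rw [Set.not_infinite] at h
  obtain ⟨x, -, hx⟩ := Ultrafilter.eq_pure_of_finite_mem h hs
  exact hU ⟨x, hx⟩

lemma equiv_nat_of_infinite {A : Set ℕ} (hA : A.Infinite) : Nonempty (↥A ≃ ℕ) := by
  haveI := hA.to_subtype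
  exact nonempty_equiv_of_countable

lemma exists_split {A : Set ℕ} (hA : A.Infinite) :
    ∃ A1 : Set ℕ, A1 ⊆ A ∧ A1.Infinite ∧ (A \ A1).Infinite := by
  obtain ⟨ψ⟩ := equiv_nat_of_infinite hA
  have hinj : Function.Injective fun k : ℕ => (ψ.symm k : ℕ) := by
    intro a b hab
    simpa using ψ.symm.injective (Subtype.ext hab)
  refine ⟨(fun k : ℕ => (ψ.symm k : ℕ)) '' {k | Even k}, ?_, ?_, ?_⟩
  · rintro x ⟨k, -, rfl⟩; exact (ψ.symm k).2
  · exact Set.Infinite.image (hinj.injOn)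
      (Set.infinite_of_injective_forall_mem (f := fun k => 2 * k)
        (fun a b h => by simpa using h) (fun a => even_two_mul a))
  · apply Set.Infinite.mono (s := (fun k : ℕ => (ψ.symm k : ℕ)) '' {k | ¬ Even k})
    · rintro x ⟨k, hk, rfl⟩
      refine ⟨(ψ.symm k).2, ?_⟩
      rintro ⟨k', hk', hkk⟩
      exact hk (hinj hkk ▸ hk')
    · exact Set.Infinite.image (hinj.injOn)
        (Set.infinite_of_injective_forall_mem (f := fun k => 2 * k + 1)
          (fun a b h => by simpa using h) (fun a => by simp [Nat.even_add_one, parity_simps]))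

lemma extend_equiv {A : Set ℕ} {h : ℕ → ℕ} (hinj : Set.InjOn h A)
    (hAc : Aᶜ.Infinite) (hBc : ((h '' A)ᶜ).Infinite) :
    ∃ e : ℕ ≃ ℕ, ∀ a ∈ A, e a = h a := by
  classical
  obtain ⟨e1, he1⟩ : ∃ e1 : ↥A ≃ ↥(h '' A), ∀ x : ↥A, (e1 x : ℕ) = h x := by
    refine ⟨Equiv.ofBijective (fun x => ⟨h x, ⟨x, x.2, rfl⟩⟩) ?_, fun x => rfl⟩
    constructor
    · intro a b hab
      exact Subtype.ext (hinj a.2 b.2 (congrArg Subtype.val hab))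
    · rintro ⟨y, x, hx, rfl⟩
      exact ⟨⟨x, hx⟩, rfl⟩
  obtain ⟨e2⟩ : Nonempty (↥(Aᶜ) ≃ ↥((h '' A)ᶜ)) := by
    haveI := hAc.to_subtype; haveI := hBc.to_subtype
    exact nonempty_equiv_of_countable
  refine ⟨(Equiv.Set.sumCompl A).symm.trans ((e1.sumCongr e2).trans (Equiv.Set.sumCompl (h '' A))), ?_⟩
  intro a ha
  have h1 : (Equiv.Set.sumCompl A).symm a = Sum.inl ⟨a, ha⟩ :=
    Equiv.Set.sumCompl_symm_apply (x := ⟨a, ha⟩)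
  simp only [Equiv.trans_apply, h1, Equiv.sumCongr_apply, Sum.map_inl,
    Equiv.Set.sumCompl_apply_inl]
  exact he1 ⟨a, ha⟩

/-- From a map injective on a set of the ultrafilter, get a global bijection agreeing with it
on a (possibly smaller) set of the ultrafilter. -/
lemma exists_equiv_agree (V : Ultrafilter ℕ) (A : Set ℕ) (h : ℕ → ℕ)
    (hA : A ∈ V) (hinj : Set.InjOn h A) :
    ∃ e : ℕ ≃ ℕ, ∃ A' ∈ V, A' ⊆ A ∧ ∀ a ∈ A', e a = h a := by
  by_cases hP : ∃ a, V = pure a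
  · obtain ⟨a, rfl⟩ := hP
    have haA : a ∈ A := hA
    refine ⟨Equiv.swap a (h a), {a}, by simp, by simpa using haA, ?_⟩
    rintro x rfl
    simp
  · have hAinf : A.Infinite := infinite_mem hP hA
    obtain ⟨A1, hA1A, hA1inf, hA2inf⟩ := exists_split hAinf
    -- pick the half that is in V
    obtain ⟨A', hA'V, hA'A, hrest⟩ : ∃ A' ∈ V, A' ⊆ A ∧ (A \ A').Infinite := by
      by_cases h1 : A1 ∈ V
      · exact ⟨A1, h1, hA1A, hA2inf⟩
      · refine ⟨A \ A1, ?_, Set.diff_subset, ?_⟩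
        · have : A ∩ A1ᶜ ∈ V := V.toFilter.inter_mem hA (Ultrafilter.compl_mem_iff_notMem.2 h1)
          simpa [Set.diff_eq] using this
        · apply hA1inf.mono
          intro x hx
          exact ⟨hA1A hx, fun hx2 => hx2.2 hx⟩
    have hinj' : Set.InjOn h A' := hinj.mono hA'A
    have hcompl : A'ᶜ.Infinite := hrest.mono (fun x hx => fun hxA' => hx.2 hxA')
    have hBc : ((h '' A')ᶜ).Infinite := by
      apply Set.Infinite.mono (s := h '' (A \ A'))
      · rintro y ⟨x, hx, rfl⟩ ⟨x', hx', hxx⟩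
        exact hx.2 (hinj (hx.1) (hA'A hx') hxx.symm ▸ hx')
      · exact Set.Infinite.image (hinj.mono Set.diff_subset) hrest
    obtain ⟨e, he⟩ := extend_equiv hinj' hcompl hBc
    exact ⟨e, A', hA'V, hA'A, he⟩

/-- Two ultrafilter maps agree if the functions agree on a set of the ultrafilter. -/
lemma map_eq_of_agree (V : Ultrafilter ℕ) {g1 g2 : ℕ → ℕ} {A : Set ℕ} (hA : A ∈ V)
    (hag : ∀ a ∈ A, g1 a = g2 a) : Ultrafilter.map g1 V = Ultrafilter.map g2 V := by
  apply Ultrafilter.coe_injective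
  exact Filter.map_congr (Filter.eventuallyEq_of_mem hA hag)

/-- distinct ultrafilters are separated by a set. -/
lemma exists_sep {W1 W2 : Ultrafilter ℕ} (h : W1 ≠ W2) : ∃ s, s ∈ W1 ∧ s ∉ W2 := by
  by_contra hc
  push_neg at hc
  apply h
  apply Ultrafilter.coe_injective
  apply Filter.ext
  intro s
  constructor
  · exact hc s
  · intro hs
    by_contra hs1
    have := hc sᶜ (Ultrafilter.compl_mem_iff_notMem.2 hs1)
    exact (Ultrafilter.compl_mem_iff_notMem.1 this) hs

/-- Diagonalization property of selective ultrafilters. -/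
lemma diag (U : Ultrafilter ℕ) (hsel : ∀ f : ℕ → ℕ, ∃ A ∈ U, Set.InjOn f A ∨ ∃ c, ∀ a ∈ A, f a = c) (hnp : ¬∃ a, U = pure a)
    (T : ℕ → Set ℕ) (hT : ∀ m, T m ∈ U) :
    ∃ B ∈ U, ∀ m ∈ B, ∀ n ∈ B, m < n → n ∈ T m := by
  classical
  obtain ⟨T1, hT1mem, hmono, hsub, hnotself⟩ :
      ∃ T1 : ℕ → Set ℕ, (∀ m, T1 m ∈ U) ∧ (∀ m m' : ℕ, m ≤ m' → T1 m' ⊆ T1 m) ∧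
        (∀ m, T1 m ⊆ T m) ∧ (∀ k, k ∉ T1 k) := by
    refine ⟨fun m => (⋂ k ∈ Set.Iic m, T k) ∩ Set.Ioi m, ?_, ?_, ?_, ?_⟩
    · intro m
      apply Filter.inter_mem
      · exact (Filter.biInter_mem (Set.finite_Iic m)).2 (fun k _ => hT k)
      · have h1 : Set.Iic m ∉ U := fun h => (Set.finite_Iic m).not_infinite (infinite_mem hnp h)
        have := Ultrafilter.compl_mem_iff_notMem.2 h1
        rwa [Set.compl_Iic] at this
    · intro m m' hmm x hx
      refine ⟨?_, lt_of_le_of_lt hmm hx.2⟩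
      have := hx.1
      rw [Set.mem_iInter₂] at this ⊢
      exact fun k hk => this k (Set.mem_Iic.2 (le_trans (Set.mem_Iic.1 hk) hmm))
    · intro m x hx
      have := hx.1
      rw [Set.mem_iInter₂] at this
      exact this m (Set.mem_Iic.2 le_rfl)
    · exact fun k hk => lt_irrefl k hk.2
  obtain ⟨h, hiff⟩ : ∃ h : ℕ → ℕ, ∀ k m, k ∈ T1 m ↔ m < h k := by
    have exh : ∀ k, ∃ m, k ∉ T1 m := fun k => ⟨k, hnotself k⟩
    refine ⟨fun k => Nat.find (exh k), fun k m => ⟨?_, ?_⟩⟩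
    · intro hk
      by_contra hc
      push_neg at hc
      exact Nat.find_spec (exh k) (hmono _ _ hc hk)
    · intro hm
      exact not_not.1 (Nat.find_min (exh k) hm)
  -- selectivity: h is injective on a set B0 ∈ U
  obtain ⟨B0, hB0U, hB0cases⟩ := hsel h
  have hInj : Set.InjOn h B0 := by
    rcases hB0cases with hi | ⟨c, hc⟩
    · exact hi
    · exfalso
      obtain ⟨k, hk1, hk2⟩ := ((infinite_mem hnp (U.toFilter.inter_mem hB0U (hT1mem c)))).nonempty
      have h1 : c < h k := (hiff k c).1 hk2
      have h2 : h k = c := hc k hk1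
      omega
  -- h is finite-to-one on B0
  have hfin : ∀ b, {k | k ∈ B0 ∧ h k < b}.Finite := by
    intro b
    apply Set.Finite.of_finite_image (f := h)
    · apply Set.Finite.subset (Set.finite_Iio b)
      rintro y ⟨k, ⟨-, hk⟩, rfl⟩
      exact hk
    · exact hInj.mono (fun x hx => hx.1)
  obtain ⟨bound, hboundle⟩ : ∃ bound : ℕ → ℕ, ∀ b k, k ∈ B0 → h k < b → k ≤ bound b := by
    refine ⟨fun b => (hfin b).toFinset.sup id, fun b k hk hkb => ?_⟩
    exact Finset.le_sup (f := id) ((Set.Finite.mem_toFinset _).2 ⟨hk, hkb⟩)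
  obtain ⟨a, ha0, haS⟩ : ∃ a : ℕ → ℕ, a 0 = 0 ∧ ∀ j, a (j + 1) = bound (a j) + a j + 1 :=
    ⟨fun j => Nat.rec 0 (fun _ aj => bound aj + aj + 1) j, rfl, fun j => rfl⟩
  have hamono : StrictMono a := by
    apply strictMono_nat_of_lt_succ
    intro n
    rw [haS]
    omega
  have hkey : ∀ j k, k ∈ B0 → a (j + 1) ≤ k → a j ≤ h k := by
    intro j k hk hak
    by_contra hlt
    push_neg at hlt
    have := hboundle (a j) k hk hlt
    rw [haS] at hak
    omega
  obtain ⟨idx, hidx1, hidx2, hidx3⟩ :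
      ∃ idx : ℕ → ℕ, (∀ k, a (idx k) ≤ k) ∧ (∀ k, k < a (idx k + 1)) ∧
        (∀ j k, a j ≤ k → j ≤ idx k) := by
    refine ⟨fun k => Nat.findGreatest (fun j => a j ≤ k) k, fun k => ?_, fun k => ?_, ?_⟩
    · exact Nat.findGreatest_spec (P := fun j => a j ≤ k) (m := 0) (Nat.zero_le k) (by show a 0 ≤ k; rw [ha0]; exact Nat.zero_le k)
    · by_contra hc
      push_neg at hc
      have h1 : Nat.findGreatest (fun j => a j ≤ k) k + 1 ≤ k := le_trans hamono.le_apply hc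
      exact (Nat.findGreatest_is_greatest (Nat.lt_succ_self _) h1) hc
    · intro j k hjk
      exact Nat.le_findGreatest (le_trans hamono.le_apply hjk) hjk
  have hidxmono : ∀ m n : ℕ, m ≤ n → idx m ≤ idx n := by
    intro m n hmn
    by_contra hc
    push_neg at hc
    have h1 : a (idx n + 1) ≤ a (idx m) := hamono.monotone (Nat.succ_le_of_lt hc)
    have h2 := hidx1 m
    have h3 := hidx2 n
    omega
  have hgeom : ∀ m n, m ∈ B0 → n ∈ B0 → m < n → h n ≤ m → idx n ≤ idx m + 1 := by
    intro m n hm hn hmn hhn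
    rcases Nat.eq_zero_or_pos (idx n) with h0 | hpos
    · omega
    · have he : (idx n - 1) + 1 = idx n := by omega
      have h1 : a ((idx n - 1) + 1) ≤ n := by rw [he]; exact hidx1 n
      have h2 : a (idx n - 1) ≤ h n := hkey (idx n - 1) n hn h1
      have h4 : idx n - 1 ≤ idx m := hidx3 _ m (le_trans h2 hhn)
      omega
  -- selectivity on idx
  obtain ⟨B1, hB1U, hB1cases⟩ := hsel idx
  have hIdxInj : Set.InjOn idx B1 := by
    rcases hB1cases with hi | ⟨c, hc⟩
    · exact hi
    · exfalso
      apply (infinite_mem hnp hB1U)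
      apply Set.Finite.subset (Set.finite_Iio (a (c + 1)))
      intro k hk
      have := hidx2 k
      rw [hc k hk] at this
      exact this
  -- parity
  obtain ⟨K, hKU, hKpar⟩ : ∃ K ∈ U, ∀ k ∈ K, ∀ k' ∈ K, (Even (idx k) ↔ Even (idx k')) := by
    by_cases hE : {k | Even (idx k)} ∈ U
    · exact ⟨_, hE, fun k hk k' hk' => ⟨fun _ => hk', fun _ => hk⟩⟩
    · refine ⟨_, Ultrafilter.compl_mem_iff_notMem.2 hE, fun k hk k' hk' => ?_⟩
      simp only [Set.mem_compl_iff, Set.mem_setOf_eq] at hk hk'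
      tauto
  refine ⟨B0 ∩ B1 ∩ K, U.toFilter.inter_mem (U.toFilter.inter_mem hB0U hB1U) hKU, ?_⟩
  rintro m ⟨⟨hm0, hm1⟩, hmK⟩ n ⟨⟨hn0, hn1⟩, hnK⟩ hmn
  apply hsub m
  rw [hiff]
  by_contra hc
  push_neg at hc
  have h1 : idx n ≤ idx m + 1 := hgeom m n hm0 hn0 hmn hc
  have h2 : idx m ≤ idx n := hidxmono m n (le_of_lt hmn)
  have h3 : idx m ≠ idx n := fun he => (Nat.lt_irrefl m) (hIdxInj hm1 hn1 he ▸ hmn)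
  have h4 : idx n = idx m + 1 := by omega
  have h5 := hKpar m hmK n hnK
  rw [h4, Nat.even_add_one] at h5
  tauto

lemma mem_sumUF {U : Ultrafilter ℕ} {V : ℕ → Ultrafilter ℕ} {X : Set (ℕ × ℕ)} :
    X ∈ sumUF U V ↔ {n | {m | (n, m) ∈ X} ∈ V n} ∈ U :=
  Iff.rfl

theorem stmt2 (U : Ultrafilter ℕ) (V : ℕ → Ultrafilter ℕ)
    (hUsel : IsSelective U) (hVsel : ∀ n, IsSelective (V n))
    (hUV : ∀ n, ¬ RKIso U (V n))
    (hVV : ∀ m n, m ≠ n → ¬ RKIso (V m) (V n))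
    (f : ℕ × ℕ → ℕ) :
    ∃ X ∈ sumUF U V,
      (∃ c, ∀ p ∈ X, f p = c) ∨
      (∃ g : ℕ → ℕ, Function.Injective g ∧ ∀ p ∈ X, f p = g p.1) ∨
      Set.InjOn f X := by
  classical
  obtain ⟨A, hAV, hAcases⟩ :
      ∃ A : ℕ → Set ℕ, (∀ n, A n ∈ V n) ∧
        ∀ n, Set.InjOn (fun m => f (n, m)) (A n) ∨ ∃ c, ∀ m ∈ A n, f (n, m) = c := by
    have hch : ∀ n, ∃ Aset, Aset ∈ V n ∧
        (Set.InjOn (fun m => f (n, m)) Aset ∨ ∃ c, ∀ m ∈ Aset, f (n, m) = c) := by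
      intro n
      obtain ⟨Aset, hA, hc⟩ := hVsel n (fun m => f (n, m))
      exact ⟨Aset, hA, hc⟩
    choose A h1 h2 using hch
    exact ⟨A, h1, h2⟩
  by_cases hUp : ∃ a, U = pure a
  · -- principal U
    obtain ⟨a, ha⟩ := hUp
    refine ⟨{p | p.1 = a ∧ p.2 ∈ A a}, ?_, ?_⟩
    · rw [mem_sumUF, ha]
      have : a ∈ {n | {m | (n, m) ∈ {p : ℕ × ℕ | p.1 = a ∧ p.2 ∈ A a}} ∈ V n} :=
        Filter.mem_of_superset (hAV a) (fun m hm => ⟨rfl, hm⟩)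
      exact this
    · rcases hAcases a with hi | ⟨c, hc⟩
      · right; right
        rintro ⟨n, m⟩ ⟨hn, hm⟩ ⟨n', m'⟩ ⟨hn', hm'⟩ hf
        simp only at hn hn' hm hm'
        subst hn; subst hn'
        have := hi hm hm' hf
        simp_all
      · left
        refine ⟨c, ?_⟩
        rintro ⟨n, m⟩ ⟨hn, hm⟩
        simp only at hn hm
        subst hn
        exact hc m hm
  · -- U nonprincipal
    have hUinf : ∀ {s : Set ℕ}, s ∈ U → s.Infinite := fun hs => infinite_mem hUp hs
    by_cases hTU : {n | Set.InjOn (fun m => f (n, m)) (A n)} ∈ U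
    · -- injective sections case
      -- at most one V n is principal
      have hPsub : {n | ∃ a, V n = pure a}.Subsingleton := by
        intro m hm n hn
        by_contra hne
        obtain ⟨am, ham⟩ := hm
        obtain ⟨an, han⟩ := hn
        apply hVV m n hne
        refine ⟨Equiv.swap am an, ?_⟩
        rw [ham, han, Ultrafilter.map_pure]
        simp
      have hPc : {n | ∃ a, V n = pure a}ᶜ ∈ U :=
        Ultrafilter.compl_mem_iff_notMem.2
          (fun h => hPsub.finite.not_infinite (hUinf h))
      have hGood : ({n | Set.InjOn (fun m => f (n, m)) (A n)} ∩ {n | ∃ a, V n = pure a}ᶜ) ∈ U :=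
        U.toFilter.inter_mem hTU hPc
      -- the image ultrafilters
      have hiso : ∀ n ∈ ({n | Set.InjOn (fun m => f (n, m)) (A n)} ∩ {n | ∃ a, V n = pure a}ᶜ),
          ∃ e : ℕ ≃ ℕ, Ultrafilter.map (⇑e) (V n) = Ultrafilter.map (fun m => f (n, m)) (V n) := by
        intro n hn
        obtain ⟨e, A', hA'V, hA'sub, hagree⟩ := exists_equiv_agree (V n) (A n) _ (hAV n) hn.1
        exact ⟨e, map_eq_of_agree (V n) hA'V hagree⟩
      have hdist : ∀ m ∈ ({n | Set.InjOn (fun m => f (n, m)) (A n)} ∩ {n | ∃ a, V n = pure a}ᶜ),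
          ∀ n ∈ ({n | Set.InjOn (fun m => f (n, m)) (A n)} ∩ {n | ∃ a, V n = pure a}ᶜ),
          m ≠ n → Ultrafilter.map (fun k => f (m, k)) (V m) ≠ Ultrafilter.map (fun k => f (n, k)) (V n) := by
        intro m hm n hn hne heq
        obtain ⟨em, hem⟩ := hiso m hm
        obtain ⟨en, hen⟩ := hiso n hn
        apply hVV m n hne
        refine ⟨em.trans en.symm, ?_⟩
        have h1 : Ultrafilter.map (⇑en.symm) (Ultrafilter.map (⇑em) (V m)) = V n := by
          rw [hem, heq, ← hen, Ultrafilter.map_map]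
          have : (⇑en.symm ∘ ⇑en) = id := by
            funext x; simp
          rw [this]
          exact Ultrafilter.map_id (V n)
        rw [← h1, Ultrafilter.map_map]
        rfl
      -- the limit ultrafilter
      have hS1 : ({n | Ultrafilter.map (fun k => f (n, k)) (V n) = U.bind (fun n => Ultrafilter.map (fun k => f (n, k)) (V n))}
          ∩ ({n | Set.InjOn (fun m => f (n, m)) (A n)} ∩ {n | ∃ a, V n = pure a}ᶜ)) ∉ U := by
        intro hmem
        obtain ⟨m, hm, n, hn, hne⟩ := (hUinf hmem).nontrivial
        exact hdist m hm.2 n hn.2 hne (hm.1.trans hn.1.symm)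
      have hT2 : (({n | Set.InjOn (fun m => f (n, m)) (A n)} ∩ {n | ∃ a, V n = pure a}ᶜ)
          ∩ {n | Ultrafilter.map (fun k => f (n, k)) (V n) ≠ U.bind (fun n => Ultrafilter.map (fun k => f (n, k)) (V n))}) ∈ U := by
        apply U.toFilter.inter_mem hGood
        apply Ultrafilter.compl_mem_iff_notMem.2
        intro h
        exact hS1 (U.toFilter.inter_mem h hGood)
      -- separating sets
      have hCex : ∀ n, ∃ C : Set ℕ,
          n ∈ (({n | Set.InjOn (fun m => f (n, m)) (A n)} ∩ {n | ∃ a, V n = pure a}ᶜ)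
            ∩ {n | Ultrafilter.map (fun k => f (n, k)) (V n) ≠ U.bind (fun n => Ultrafilter.map (fun k => f (n, k)) (V n))}) →
          C ∈ Ultrafilter.map (fun k => f (n, k)) (V n) ∧
          C ∉ U.bind (fun n => Ultrafilter.map (fun k => f (n, k)) (V n)) := by
        intro n
        by_cases hn : n ∈ (({n | Set.InjOn (fun m => f (n, m)) (A n)} ∩ {n | ∃ a, V n = pure a}ᶜ)
            ∩ {n | Ultrafilter.map (fun k => f (n, k)) (V n) ≠ U.bind (fun n => Ultrafilter.map (fun k => f (n, k)) (V n))})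
        · obtain ⟨s, hs1, hs2⟩ := exists_sep hn.2
          exact ⟨s, fun _ => ⟨hs1, hs2⟩⟩
        · exact ⟨∅, fun h => absurd h hn⟩
      choose C hCspec using hCex
      -- diagonalize
      obtain ⟨B, hBU, hBdiag⟩ := diag U hUsel hUp
        (fun m => if m ∈ (({n | Set.InjOn (fun m => f (n, m)) (A n)} ∩ {n | ∃ a, V n = pure a}ᶜ)
            ∩ {n | Ultrafilter.map (fun k => f (n, k)) (V n) ≠ U.bind (fun n => Ultrafilter.map (fun k => f (n, k)) (V n))})
          then {k | C m ∉ Ultrafilter.map (fun j => f (k, j)) (V k)} else Set.univ)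
        (by
          intro m
          split_ifs with hm
          · have h1 : C m ∉ U.bind (fun n => Ultrafilter.map (fun k => f (n, k)) (V n)) := (hCspec m hm).2
            have h2 : {k | C m ∈ Ultrafilter.map (fun j => f (k, j)) (V k)} ∉ U := h1
            have h3 := Ultrafilter.compl_mem_iff_notMem.2 h2
            exact h3
          · exact Filter.univ_mem)
      -- the final set of first coordinates
      set G := B ∩ (({n | Set.InjOn (fun m => f (n, m)) (A n)} ∩ {n | ∃ a, V n = pure a}ᶜ)
          ∩ {n | Ultrafilter.map (fun k => f (n, k)) (V n) ≠ U.bind (fun n => Ultrafilter.map (fun k => f (n, k)) (V n))}) with hGdef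
      have hGU : G ∈ U := U.toFilter.inter_mem hBU hT2
      have hsep : ∀ m ∈ G, ∀ n ∈ G, m < n → C m ∉ Ultrafilter.map (fun j => f (n, j)) (V n) := by
        intro m hm n hn hmn
        have := hBdiag m hm.1 n hn.1 hmn
        rw [if_pos hm.2] at this
        exact this
      -- disjointified sets
      set E : ℕ → Set ℕ := fun n => C n \ ⋃ m ∈ {m | m ∈ G ∧ m < n}, C m with hEdef
      have hEW : ∀ n ∈ G, E n ∈ Ultrafilter.map (fun j => f (n, j)) (V n) := by
        intro n hn
        have h1 : C n ∈ Ultrafilter.map (fun j => f (n, j)) (V n) := (hCspec n hn.2).1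
        have h2 : (⋃ m ∈ {m | m ∈ G ∧ m < n}, C m) ∉ Ultrafilter.map (fun j => f (n, j)) (V n) := by
          intro hmem
          have hfin : {m | m ∈ G ∧ m < n}.Finite :=
            Set.Finite.subset (Set.finite_Iio n) (fun m hm => hm.2)
          obtain ⟨m, hm, hCm⟩ := (Ultrafilter.finite_biUnion_mem_iff hfin).1 hmem
          exact hsep m hm.1 n hn hm.2 hCm
        show C n \ ⋃ m ∈ {m | m ∈ G ∧ m < n}, C m ∈ Ultrafilter.map (fun j => f (n, j)) (V n)
        have heq : C n \ ⋃ m ∈ {m | m ∈ G ∧ m < n}, C m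
            = C n ∩ (⋃ m ∈ {m | m ∈ G ∧ m < n}, C m)ᶜ := rfl
        rw [heq]
        exact Filter.inter_mem h1 (Ultrafilter.compl_mem_iff_notMem.2 h2)
      have hEdisj : ∀ m ∈ G, ∀ n ∈ G, m ≠ n → ∀ x, x ∈ E m → x ∈ E n → False := by
        have key : ∀ m ∈ G, ∀ n ∈ G, m < n → ∀ x, x ∈ E m → x ∈ E n → False := by
          intro m hm n hn hmn x hxm hxn
          apply hxn.2
          apply Set.mem_biUnion (show m ∈ {m | m ∈ G ∧ m < n} from ⟨hm, hmn⟩)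
          exact hxm.1
        intro m hm n hn hne x hxm hxn
        rcases Nat.lt_or_ge m n with h | h
        · exact key m hm n hn h x hxm hxn
        · exact key n hn m hm (by omega) x hxn hxm
      -- the witness set
      refine ⟨{p | p.1 ∈ G ∧ p.2 ∈ A p.1 ∧ f p ∈ E p.1}, ?_, ?_⟩
      · rw [mem_sumUF]
        apply Filter.mem_of_superset hGU
        intro n hn
        simp only [Set.mem_setOf_eq]
        have : A n ∩ (fun m => f (n, m)) ⁻¹' (E n) ∈ V n :=
          Filter.inter_mem (hAV n) (hEW n hn)
        apply Filter.mem_of_superset this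
        intro m hm
        exact ⟨hn, hm.1, hm.2⟩
      · right; right
        rintro ⟨n, m⟩ ⟨hnG, hmA, hfE⟩ ⟨n', m'⟩ ⟨hnG', hmA', hfE'⟩ hf
        simp only at hnG hmA hfE hnG' hmA' hfE' hf
        have hnn : n = n' := by
          by_contra hne
          exact hEdisj n hnG n' hnG' hne (f (n, m)) hfE (hf ▸ hfE')
        subst hnn
        have : m = m' := hnG.2.1.1 hmA hmA' hf
        simp [this]
    · -- constant sections case
      have hSU : {n | Set.InjOn (fun m => f (n, m)) (A n)}ᶜ ∈ U :=
        Ultrafilter.compl_mem_iff_notMem.2 hTU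
      have hcex : ∀ n, ∃ c : ℕ, n ∈ {n | Set.InjOn (fun m => f (n, m)) (A n)}ᶜ →
          ∀ m ∈ A n, f (n, m) = c := by
        intro n
        by_cases hn : ∃ c, ∀ m ∈ A n, f (n, m) = c
        · obtain ⟨c, hc⟩ := hn
          exact ⟨c, fun _ => hc⟩
        · refine ⟨0, fun hmem => absurd ?_ hn⟩
          rcases hAcases n with hi | hc
          · exact absurd hi hmem
          · exact hc
      choose c hcspec using hcex
      obtain ⟨B0, hB0U, hB0cases⟩ := hUsel c
      rcases hB0cases with hInj | ⟨d, hd⟩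
      · -- c injective on B0 : factor through first coordinate
        obtain ⟨e, A', hA'U, hA'sub, hagree⟩ := exists_equiv_agree U B0 c hB0U hInj
        refine ⟨{p | p.1 ∈ A' ∩ {n | Set.InjOn (fun m => f (n, m)) (A n)}ᶜ ∧ p.2 ∈ A p.1}, ?_, ?_⟩
        · rw [mem_sumUF]
          apply Filter.mem_of_superset (U.toFilter.inter_mem hA'U hSU)
          intro n hn
          simp only [Set.mem_setOf_eq]
          exact Filter.mem_of_superset (hAV n) (fun m hm => ⟨hn, hm⟩)
        · right; left
          refine ⟨⇑e, e.injective, ?_⟩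
          rintro ⟨n, m⟩ ⟨⟨hnA', hnS⟩, hm⟩
          simp only at hm ⊢
          rw [hcspec n hnS m hm, hagree n hnA']
      · -- c constant on B0 : f constant
        refine ⟨{p | p.1 ∈ B0 ∩ {n | Set.InjOn (fun m => f (n, m)) (A n)}ᶜ ∧ p.2 ∈ A p.1}, ?_, ?_⟩
        · rw [mem_sumUF]
          apply Filter.mem_of_superset (U.toFilter.inter_mem hB0U hSU)
          intro n hn
          simp only [Set.mem_setOf_eq]
          exact Filter.mem_of_superset (hAV n) (fun m hm => ⟨hn, hm⟩)
        · left
          refine ⟨d, ?_⟩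
          rintro ⟨n, m⟩ ⟨⟨hnB, hnS⟩, hm⟩
          simp only at hm ⊢
          rw [hcspec n hnS m hm, hd n hnB]
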